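/- (Almost sure consensus, Theorem 1) In the distributed setup described in the context, consensus of the estimates is achieved almost surely: for every agent i ∈ {1, ..., n}, ‖ξ^i_k − ξ̄_k‖₂ → 0 as k → ∞ with probability one. -/

import Mathlib

open MeasureTheory ProbabilityTheory Filter
open scoped BigOperators RealInnerProductSpace Topology

/-- The two-sided randomized difference
`d = [f(x + cΔ) − f(x − cΔ) + ε] Δ⁻ / (2c)`, where `Δ⁻` is the vector of
componentwise reciprocals of `Δ`. -/
noncomputable def twoSidedDiff {m : ℕ} (f : EuclideanSpace ℝ (Fin m) → ℝ) (c : ℝ)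
    (x Δ : EuclideanSpace ℝ (Fin m)) (e : ℝ) : EuclideanSpace ℝ (Fin m) :=
  ((f (x + c • Δ) - f (x - c • Δ) + e) / (2 * c)) •
    (WithLp.toLp 2 (fun p => (Δ p)⁻¹) : EuclideanSpace ℝ (Fin m))

open Metric
open scoped ENNReal


lemma noise_sq_summable_tendsto_zero {Ω : Type*} [MeasurableSpace Ω] (μ : Measure Ω)
    [IsProbabilityMeasure μ]
    (ι c : ℕ → ℝ) (ε : ℕ → Ω → ℝ) (e : ℝ)
    (hmeas : ∀ k, Measurable (ε k))
    (hε2 : ∀ k, ∫ ω, (ε k ω) ^ 2 ∂μ ≤ e ^ 2)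
    (hmem : ∀ k, MemLp (ε k) 2 μ)
    (hratio2 : Summable (fun k => (ι k / c k) ^ 2)) :
    ∀ᵐ ω ∂μ, Tendsto (fun k => (ι k / c k) * ε k ω) atTop (𝓝 0) := by
  set g : ℕ → Ω → ℝ≥0∞ := fun k ω => ENNReal.ofReal (((ι k / c k) * ε k ω) ^ 2) with hg
  have hgmeas : ∀ k, Measurable (g k) := by
    intro k
    exact (((measurable_const.mul (hmeas k)).pow measurable_const)).ennreal_ofReal
  have hint : ∀ k, ∫⁻ ω, g k ω ∂μ ≤ ENNReal.ofReal ((ι k / c k) ^ 2 * e ^ 2) := by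
    intro k
    have h1 : ∀ ω, ((ι k / c k) * ε k ω) ^ 2 = (ι k / c k) ^ 2 * (ε k ω) ^ 2 := by
      intro ω; ring
    have h2 : ∫⁻ ω, g k ω ∂μ = ∫⁻ ω, ENNReal.ofReal ((ι k / c k) ^ 2 * (ε k ω) ^ 2) ∂μ := by
      simp only [hg, h1]
    rw [h2]
    have hsq : Integrable (fun ω => (ε k ω) ^ 2) μ := by
      have := (hmem k).integrable_sq
      exact this
    have h3 : ∫⁻ ω, ENNReal.ofReal ((ι k / c k) ^ 2 * (ε k ω) ^ 2) ∂μ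
        = ENNReal.ofReal (∫ ω, (ι k / c k) ^ 2 * (ε k ω) ^ 2 ∂μ) := by
      rw [← MeasureTheory.ofReal_integral_eq_lintegral_ofReal]
      · exact hsq.const_mul _
      · filter_upwards with ω
        positivity
    rw [h3]
    apply ENNReal.ofReal_le_ofReal
    rw [integral_const_mul]
    apply mul_le_mul_of_nonneg_left (hε2 k) (by positivity)
  have hsum : ∑' k, ∫⁻ ω, g k ω ∂μ < ⊤ := by
    calc ∑' k, ∫⁻ ω, g k ω ∂μ ≤ ∑' k, ENNReal.ofReal ((ι k / c k) ^ 2 * e ^ 2) :=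
          ENNReal.tsum_le_tsum hint
      _ < ⊤ := by
          have hs : Summable (fun k => (ι k / c k) ^ 2 * e ^ 2) := hratio2.mul_right _
          rw [← ENNReal.ofReal_tsum_of_nonneg (fun n => by positivity) hs]
          exact ENNReal.ofReal_lt_top
  have hlint : ∫⁻ ω, ∑' k, g k ω ∂μ < ⊤ := by
    rw [lintegral_tsum (fun k => (hgmeas k).aemeasurable)]
    exact hsum
  have hae : ∀ᵐ ω ∂μ, ∑' k, g k ω < ⊤ := ae_lt_top (by
      exact Measurable.ennreal_tsum hgmeas) hlint.ne
  filter_upwards [hae] with ω hω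
  -- from finiteness of the tsum of squares, deduce the terms tend to 0
  have hsummable : Summable (fun k => ((ι k / c k) * ε k ω) ^ 2) := by
    have := ENNReal.summable_toReal hω.ne
    have heq : ∀ k, (g k ω).toReal = ((ι k / c k) * ε k ω) ^ 2 := by
      intro k
      rw [hg]
      exact ENNReal.toReal_ofReal (by positivity)
    simpa [heq] using this
  have h0 : Tendsto (fun k => ((ι k / c k) * ε k ω) ^ 2) atTop (𝓝 0) :=
    hsummable.tendsto_atTop_zero
  have habs : Tendsto (fun k => |(ι k / c k) * ε k ω|) atTop (𝓝 0) := by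
    have := h0.sqrt
    simpa [Real.sqrt_sq_eq_abs] using this
  exact tendsto_zero_iff_abs_tendsto_zero _ |>.mpr habs


section Helpers

variable {m : ℕ}

local notation "E" => EuclideanSpace ℝ (Fin m)

/-- Pythagoras-type inequality for a nearest-point projection onto a convex set. -/
lemma proj_sq_ineq (Xs : Set E) (hcv : Convex ℝ Xs)
    (Pf y z : E) (hPmem : Pf ∈ Xs) (hz : z ∈ Xs)
    (hPmin : ∀ w ∈ Xs, ‖y - Pf‖ ≤ ‖y - w‖) :
    ‖Pf - z‖ ^ 2 + ‖y - Pf‖ ^ 2 ≤ ‖y - z‖ ^ 2 := by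
  have hinner : ⟪y - Pf, z - Pf⟫ ≤ 0 := by
    set c := ‖z - Pf‖ ^ 2 with hc
    have hc0 : 0 ≤ c := by positivity
    have key : ∀ t : ℝ, 0 < t → t ≤ 1 → ⟪y - Pf, z - Pf⟫ ≤ t * c / 2 := by
      intro t ht0 ht1
      have hmem : (1 - t) • Pf + t • z ∈ Xs :=
        hcv hPmem hz (by linarith) (le_of_lt ht0) (by ring)
      have h1 : ‖y - Pf‖ ≤ ‖y - ((1 - t) • Pf + t • z)‖ := hPmin _ hmem
      have h2 : y - ((1 - t) • Pf + t • z) = (y - Pf) - t • (z - Pf) := by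
        rw [smul_sub, sub_smul, one_smul]
        abel
    -- expand the square
      have h3 : ‖y - Pf‖ ^ 2 ≤ ‖(y - Pf) - t • (z - Pf)‖ ^ 2 := by
        rw [← h2]
        have := norm_nonneg (y - Pf)
        nlinarith [h1, norm_nonneg (y - ((1 - t) • Pf + t • z))]
      have h4 : ‖(y - Pf) - t • (z - Pf)‖ ^ 2
          = ‖y - Pf‖ ^ 2 - 2 * (t * ⟪y - Pf, z - Pf⟫) + t ^ 2 * c := by
        rw [norm_sub_sq_real, real_inner_smul_right, norm_smul]
        simp [hc, Real.norm_eq_abs, abs_of_pos ht0]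
        ring
      rw [h4] at h3
      nlinarith
    by_contra hpos
    push_neg at hpos
    set p := ⟪y - Pf, z - Pf⟫ with hp
    have hp0 : 0 < p := hpos
    rcases eq_or_lt_of_le hc0 with hceq | hcpos
    · have := key 1 one_pos le_rfl
      rw [← hceq] at this
      linarith
    · have ht0 : 0 < min 1 (p / c) := lt_min one_pos (by positivity)
      have hkey := key _ ht0 (min_le_left _ _)
      have h5 : min 1 (p / c) ≤ p / c := min_le_right _ _
      have h6 : min 1 (p / c) * c ≤ (p / c) * c :=
        mul_le_mul_of_nonneg_right h5 hcpos.le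
      have h7 : (p / c) * c = p := div_mul_cancel₀ _ (ne_of_gt hcpos)
      linarith
  have hexp : ‖y - z‖ ^ 2 = ‖y - Pf‖ ^ 2 + 2 * ⟪y - Pf, Pf - z⟫ + ‖Pf - z‖ ^ 2 := by
    have : y - z = (y - Pf) + (Pf - z) := by abel
    rw [this, norm_add_sq_real]
  have : ⟪y - Pf, Pf - z⟫ = - ⟪y - Pf, z - Pf⟫ := by
    rw [← inner_neg_right]
    congr 1
    abel
  nlinarith [hexp, hinner, this]

/-- coordinatewise bound gives a norm bound in Euclidean space -/
lemma euclid_norm_le (v : E) (Cb : ℝ) (hC : 0 ≤ Cb) (h : ∀ p, |v p| ≤ Cb) :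
    ‖v‖ ≤ Real.sqrt m * Cb := by
  rw [EuclideanSpace.norm_eq]
  have h1 : ∑ p, ‖v p‖ ^ 2 ≤ (m : ℝ) * Cb ^ 2 := by
    calc ∑ p : Fin m, ‖v p‖ ^ 2 ≤ ∑ _p : Fin m, Cb ^ 2 := by
          apply Finset.sum_le_sum
          intro p _
          have := h p
          rw [Real.norm_eq_abs]
          nlinarith [abs_nonneg (v p)]
      _ = (m : ℝ) * Cb ^ 2 := by simp [mul_comm]
  calc Real.sqrt (∑ p, ‖v p‖ ^ 2) ≤ Real.sqrt ((m : ℝ) * Cb ^ 2) := Real.sqrt_le_sqrt h1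
    _ = Real.sqrt m * Cb := by
        rw [Real.sqrt_mul (Nat.cast_nonneg m), Real.sqrt_sq hC]

/-- discrete path length bound -/
lemma norm_sub_le_path (u : ℕ → E) (a b : ℕ) (hab : a ≤ b) :
    ‖u a - u b‖ ≤ ∑ s ∈ Finset.Ico a b, ‖u (s + 1) - u s‖ := by
  induction b, hab using Nat.le_induction with
  | base => simp
  | succ b hab ih =>
      rw [Finset.sum_Ico_succ_top hab]
      calc ‖u a - u (b+1)‖ ≤ ‖u a - u b‖ + ‖u b - u (b+1)‖ := by
            have : u a - u (b+1) = (u a - u b) + (u b - u (b+1)) := by abel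
            rw [this]; exact norm_add_le _ _
        _ ≤ (∑ s ∈ Finset.Ico a b, ‖u (s + 1) - u s‖) + ‖u (b+1) - u b‖ := by
            gcongr
            rw [norm_sub_rev]
        _ = _ := by ring

end Helpers


/-- Compactness modulus: points of a compact set that are uniformly close to every `X i`
are close to the intersection. -/
lemma modulus_lemma {m n : ℕ} (X : Fin n → Set (EuclideanSpace ℝ (Fin m)))
    (hXcl : ∀ i, IsClosed (X i)) (hXne : ∀ i, (X i).Nonempty)
    (hcapne : (⋂ i, X i).Nonempty)
    (K : Set (EuclideanSpace ℝ (Fin m))) (hK : IsCompact K) :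
    ∀ ε > 0, ∃ σ > 0, ∀ p ∈ K, (∀ i, infDist p (X i) ≤ σ) →
      infDist p (⋂ i, X i) ≤ ε := by
  intro ε hε
  by_contra hcon
  push_neg at hcon
  have hseq : ∀ j : ℕ, ∃ p ∈ K, (∀ i, infDist p (X i) ≤ 1 / (j + 1)) ∧
      ε < infDist p (⋂ i, X i) := by
    intro j
    obtain ⟨p, hp1, hp2, hp3⟩ := hcon (1 / (j + 1)) (by positivity)
    exact ⟨p, hp1, hp2, hp3⟩
  choose p hpK hpX hpcap using hseq
  obtain ⟨p', hp'K, φ, hφmono, hφtend⟩ := hK.tendsto_subseq hpK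
  -- p' is in every X i
  have hp'X : ∀ i, p' ∈ X i := by
    intro i
    rw [(hXcl i).mem_iff_infDist_zero (hXne i)]
    have htend : Tendsto (fun j => infDist (p (φ j)) (X i)) atTop (𝓝 (infDist p' (X i))) :=
      (continuous_infDist_pt (X i)).continuousAt.tendsto.comp hφtend
    have hub : ∀ j, infDist (p (φ j)) (X i) ≤ 1 / (j + 1) := by
      intro j
      calc infDist (p (φ j)) (X i) ≤ 1 / (φ j + 1) := hpX (φ j) i
        _ ≤ 1 / (j + 1) := by
            apply one_div_le_one_div_of_le (by positivity)
            have h : j ≤ φ j := hφmono.le_apply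
            have hc : (j : ℝ) ≤ (φ j : ℝ) := by exact_mod_cast h
            linarith
    have h1 : Tendsto (fun j : ℕ => 1 / ((j : ℝ) + 1)) atTop (𝓝 0) :=
      tendsto_one_div_add_atTop_nhds_zero_nat
    have hle : infDist p' (X i) ≤ 0 := le_of_tendsto_of_tendsto' htend h1 hub
    exact le_antisymm hle infDist_nonneg
  have hp'cap : p' ∈ ⋂ i, X i := Set.mem_iInter.mpr hp'X
  have htend2 : Tendsto (fun j => infDist (p (φ j)) (⋂ i, X i)) atTop
      (𝓝 (infDist p' (⋂ i, X i))) :=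
    (continuous_infDist_pt _).continuousAt.tendsto.comp hφtend
  have hge : ε ≤ infDist p' (⋂ i, X i) :=
    ge_of_tendsto htend2 (Filter.Eventually.of_forall fun j => (hpcap (φ j)).le)
  rw [infDist_zero_of_mem hp'cap] at hge
  linarith


/-- Abstract "anchored Lyapunov" lemma. -/
lemma scalar_consensus (κ : ℕ) (hκ : 1 ≤ κ) (B C Vbar : ℝ) (hB : 0 < B) (hC : 0 < C)
    (hVbar : 0 ≤ Vbar)
    (V : ℕ → ℕ → ℝ) (Φ r S : ℕ → ℝ)
    (hΦ0 : ∀ k, 0 ≤ Φ k) (hr0 : ∀ k, 0 ≤ r k) (hS0 : ∀ k, 0 ≤ S k)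
    (hV0 : ∀ q k, 0 ≤ V q k) (hVbd : ∀ q k, V q k ≤ Vbar)
    (hVstep : ∀ q k, V q (k + 1) + Φ k ≤ V q k + B * r k)
    (hSw : ∀ k, S k ≤ C * ∑ s ∈ Finset.Ico k (k + κ), (Real.sqrt (Φ s) + r s))
    (hanchor : ∀ ε > 0, ∃ σ > 0, ∀ q, S q ≤ σ → V q q ≤ ε)
    (hr : Tendsto r atTop (𝓝 0)) :
    Tendsto S atTop (𝓝 0) := by
  have hκR : (0:ℝ) < κ := by exact_mod_cast hκ
  have htel : ∀ q a b, a ≤ b →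
      V q b + ∑ s ∈ Finset.Ico a b, Φ s ≤ V q a + B * ∑ s ∈ Finset.Ico a b, r s := by
    intro q a b hab
    induction b, hab using Nat.le_induction with
    | base => simp
    | succ b hab ih =>
        rw [Finset.sum_Ico_succ_top hab, Finset.sum_Ico_succ_top hab]
        have h1 := hVstep q b
        linarith
  have hrsum : ∀ (a b : ℕ) (ρ : ℝ), (∀ s, a ≤ s → r s ≤ ρ) →
      ∑ s ∈ Finset.Ico a b, r s ≤ ((b - a : ℕ) : ℝ) * ρ := by
    intro a b ρ hρ
    calc ∑ s ∈ Finset.Ico a b, r s ≤ (Finset.Ico a b).card • ρ := by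
          apply Finset.sum_le_card_nsmul
          intro s hs
          exact hρ s (Finset.mem_Ico.mp hs).1
      _ = ((b - a : ℕ) : ℝ) * ρ := by rw [Nat.card_Ico, nsmul_eq_mul]
  have hburn : ∀ (k : ℕ) (σ : ℝ), 0 < σ → σ ≤ S k →
      (∑ s ∈ Finset.Ico k (k + κ), r s) ≤ σ / (2 * C) →
      σ ^ 2 / (4 * C ^ 2 * κ) ≤ ∑ s ∈ Finset.Ico k (k + κ), Φ s := by
    intro k σ hσ hσS hrw
    have h1 : S k ≤ C * ((∑ s ∈ Finset.Ico k (k + κ), Real.sqrt (Φ s))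
        + ∑ s ∈ Finset.Ico k (k + κ), r s) := by
      rw [← Finset.sum_add_distrib]
      exact hSw k
    have h2 : σ / (2 * C) ≤ ∑ s ∈ Finset.Ico k (k + κ), Real.sqrt (Φ s) := by
      rw [mul_add] at h1
      have h1'' : C * ∑ s ∈ Finset.Ico k (k + κ), r s ≤ σ / 2 := by
        calc C * ∑ s ∈ Finset.Ico k (k + κ), r s ≤ C * (σ / (2 * C)) :=
              mul_le_mul_of_nonneg_left hrw hC.le
          _ = σ / 2 := by field_simp
      rw [div_le_iff₀ (by linarith : (0:ℝ) < 2 * C)]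
      nlinarith
    have h3 : (∑ s ∈ Finset.Ico k (k + κ), Real.sqrt (Φ s)) ^ 2
        ≤ (κ : ℝ) * ∑ s ∈ Finset.Ico k (k + κ), Φ s := by
      have hcs := sq_sum_le_card_mul_sum_sq (s := Finset.Ico k (k + κ))
        (f := fun s => Real.sqrt (Φ s))
      rw [Nat.card_Ico] at hcs
      simp only [Nat.add_sub_cancel_left] at hcs
      calc (∑ s ∈ Finset.Ico k (k + κ), Real.sqrt (Φ s)) ^ 2
          ≤ (κ : ℝ) * ∑ s ∈ Finset.Ico k (k + κ), Real.sqrt (Φ s) ^ 2 := hcs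
        _ = (κ : ℝ) * ∑ s ∈ Finset.Ico k (k + κ), Φ s := by
            congr 1
            exact Finset.sum_congr rfl fun s _ => Real.sq_sqrt (hΦ0 s)
    have h2n : (0:ℝ) ≤ σ / (2 * C) := by positivity
    have h4 : (σ / (2 * C)) ^ 2 ≤ (κ : ℝ) * ∑ s ∈ Finset.Ico k (k + κ), Φ s :=
      le_trans (pow_le_pow_left₀ h2n h2 2) h3
    have h5 : σ ^ 2 / (4 * C ^ 2 * κ) = (σ / (2 * C)) ^ 2 / κ := by
      rw [div_pow, div_div]
      ring_nf
    rw [h5, div_le_iff₀ hκR]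
    nlinarith [h4]
  -- main argument
  rw [Metric.tendsto_atTop]
  intro δ hδ
  set burnδ := δ ^ 2 / (4 * C ^ 2 * κ) with hburnδdef
  have hburnδpos : 0 < burnδ := by positivity
  obtain ⟨σ0, hσ0pos, hσ0⟩ := hanchor (burnδ / 4) (by positivity)
  set σ := min σ0 δ with hσdef
  have hσpos : 0 < σ := lt_min hσ0pos hδ
  have hσδ : σ ≤ δ := min_le_right _ _
  have hσσ0 : σ ≤ σ0 := min_le_left _ _
  set burnσ := σ ^ 2 / (4 * C ^ 2 * κ) with hburnσdef
  have hburnσpos : 0 < burnσ := by positivity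
  obtain ⟨M, hMge'⟩ := exists_nat_ge (2 * Vbar / burnσ + 2)
  have hMge : 2 * Vbar / burnσ ≤ (M : ℝ) - 2 := by linarith
  set ρ : ℝ := min (σ / (2 * C * κ)) (min (burnσ / (2 * B * κ))
    (burnδ / (4 * B * (((M + 2) * κ : ℕ) : ℝ)))) with hρdef
  have hMκpos : (0:ℝ) < ((M + 2) * κ : ℕ) := by
    have : (1:ℕ) ≤ (M + 2) * κ := Nat.one_le_iff_ne_zero.mpr (by positivity)
    exact_mod_cast this
  have hρpos : 0 < ρ := by
    apply lt_min (by positivity)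
    apply lt_min (by positivity)
    apply div_pos hburnδpos
    nlinarith [hMκpos, hB]
  obtain ⟨N0, hN0⟩ : ∃ N0, ∀ s, N0 ≤ s → r s ≤ ρ := by
    obtain ⟨N0, h⟩ := (Metric.tendsto_atTop.mp hr) ρ hρpos
    refine ⟨N0, fun s hs => ?_⟩
    have := h s hs
    rw [Real.dist_eq, sub_zero, abs_of_nonneg (hr0 s)] at this
    exact this.le
  refine ⟨N0 + (M + 2) * κ, fun k hk => ?_⟩
  rw [Real.dist_eq, sub_zero, abs_of_nonneg (hS0 k)]
  by_contra hcon
  push_neg at hcon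
  -- now δ ≤ S k; derive a contradiction
  have hkey : ∀ a, N0 ≤ a → ∀ b, ∑ s ∈ Finset.Ico a b, r s ≤ ((b - a : ℕ) : ℝ) * ρ :=
    fun a ha b => hrsum a b ρ (fun s hs => hN0 s (le_trans ha hs))
  -- window r-bound of length κ
  have hwinr : ∀ a, N0 ≤ a → ∑ s ∈ Finset.Ico a (a + κ), r s ≤ σ / (2 * C) := by
    intro a ha
    calc ∑ s ∈ Finset.Ico a (a + κ), r s ≤ ((a + κ - a : ℕ) : ℝ) * ρ := hkey a ha _
      _ = (κ : ℝ) * ρ := by rw [Nat.add_sub_cancel_left]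
      _ ≤ (κ : ℝ) * (σ / (2 * C * κ)) := by
          apply mul_le_mul_of_nonneg_left _ hκR.le
          exact le_trans (min_le_left _ _) le_rfl
      _ = σ / (2 * C) := by field_simp
  set q0 : ℕ := k - (M + 1) * κ with hq0def
  have hκM : (M + 1) * κ + κ = (M + 2) * κ := by ring
  have hq0k : q0 + (M + 1) * κ = k := by
    rw [hq0def]
    have : (M + 1) * κ ≤ k := by
      calc (M + 1) * κ ≤ (M + 2) * κ := Nat.mul_le_mul_right κ (by omega)
        _ ≤ N0 + (M + 2) * κ := by omega
        _ ≤ k := hk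
    omega
  have hq0N0 : N0 + κ ≤ q0 := by
    have h1 : N0 + (M + 2) * κ ≤ k := hk
    rw [← hκM] at h1
    omega
  have hMul : ∀ j : ℕ, j ≤ M → j * κ ≤ M * κ := fun j hj => Nat.mul_le_mul_right κ hj
  have hM1 : (M + 1) * κ = M * κ + κ := by ring
  by_cases hanch : ∃ q, q0 ≤ q ∧ q < k ∧ S q ≤ σ
  · -- anchored case
    obtain ⟨q, hq1, hq2, hq3⟩ := hanch
    have hVqq : V q q ≤ burnδ / 4 := hσ0 q (le_trans hq3 hσσ0)
    have hqN0 : N0 ≤ q := le_trans (by omega) hq1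
    have htel2 := htel q q (k + κ) (by omega)
    have hΦwin : burnδ ≤ ∑ s ∈ Finset.Ico k (k + κ), Φ s := by
      apply hburn k δ hδ hcon
      calc ∑ s ∈ Finset.Ico k (k + κ), r s ≤ σ / (2 * C) := hwinr k (by omega)
        _ ≤ δ / (2 * C) := by gcongr
    have hΦsub : ∑ s ∈ Finset.Ico k (k + κ), Φ s ≤ ∑ s ∈ Finset.Ico q (k + κ), Φ s := by
      apply Finset.sum_le_sum_of_subset_of_nonneg
      · exact Finset.Ico_subset_Ico hq2.le le_rfl
      · exact fun s _ _ => hΦ0 s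
    have hrbig : ∑ s ∈ Finset.Ico q (k + κ), r s ≤ (((M + 2) * κ : ℕ) : ℝ) * ρ := by
      calc ∑ s ∈ Finset.Ico q (k + κ), r s ≤ ((k + κ - q : ℕ) : ℝ) * ρ := hkey q hqN0 _
        _ ≤ (((M + 2) * κ : ℕ) : ℝ) * ρ := by
            apply mul_le_mul_of_nonneg_right _ hρpos.le
            have hle : k + κ - q ≤ (M + 2) * κ := by omega
            exact_mod_cast hle
    have hρ3 : ρ ≤ burnδ / (4 * B * (((M + 2) * κ : ℕ) : ℝ)) :=
      le_trans (min_le_right _ _) (min_le_right _ _)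
    have hBr : B * ∑ s ∈ Finset.Ico q (k + κ), r s ≤ burnδ / 4 := by
      have h1 : B * ∑ s ∈ Finset.Ico q (k + κ), r s
          ≤ B * ((((M + 2) * κ : ℕ) : ℝ) * ρ) :=
        mul_le_mul_of_nonneg_left hrbig hB.le
      have h2 : B * ((((M + 2) * κ : ℕ) : ℝ) * ρ)
          ≤ B * ((((M + 2) * κ : ℕ) : ℝ) * (burnδ / (4 * B * (((M + 2) * κ : ℕ) : ℝ)))) := by
        apply mul_le_mul_of_nonneg_left _ hB.le
        exact mul_le_mul_of_nonneg_left hρ3 hMκpos.le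
      have h3 : B * ((((M + 2) * κ : ℕ) : ℝ) * (burnδ / (4 * B * (((M + 2) * κ : ℕ) : ℝ))))
          = burnδ / 4 := by
        have hBne : B ≠ 0 := ne_of_gt hB
        have hMκne : (((M + 2) * κ : ℕ) : ℝ) ≠ 0 := ne_of_gt hMκpos
        field_simp
      linarith
    have hVk : 0 ≤ V q (k + κ) := hV0 q (k + κ)
    linarith
  · -- no anchor: dissipation on every block
    push_neg at hanch
    have hblock : ∀ j, j ≤ M → burnσ ≤ ∑ s ∈ Finset.Ico (q0 + j * κ) (q0 + j * κ + κ), Φ s := by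
      intro j hj
      have hjκ : j * κ ≤ M * κ := hMul j hj
      apply hburn _ σ hσpos
      · apply le_of_lt
        apply hanch _ (by omega)
        omega
      · exact hwinr _ (by omega)
    have hcum : ∀ l, l ≤ M + 1 →
        (l : ℝ) * burnσ ≤ ∑ s ∈ Finset.Ico q0 (q0 + l * κ), Φ s := by
      intro l hl
      induction l with
      | zero => simp
      | succ l ih =>
          have h1 := ih (by omega)
          have h2 := hblock l (by omega)
          have hsp : q0 + (l + 1) * κ = q0 + l * κ + κ := by ring
          rw [hsp, ← Finset.sum_Ico_consecutive (fun s => Φ s)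
            (Nat.le_add_right q0 (l * κ)) (Nat.le_add_right _ κ)]
          push_cast
          linarith
    have hcumM := hcum (M + 1) le_rfl
    rw [hq0k] at hcumM
    have htel3 := htel q0 q0 k (by omega)
    have hrtot : ∑ s ∈ Finset.Ico q0 k, r s ≤ (((M + 1) * κ : ℕ) : ℝ) * ρ := by
      calc ∑ s ∈ Finset.Ico q0 k, r s ≤ ((k - q0 : ℕ) : ℝ) * ρ := hkey q0 (by omega) _
        _ = (((M + 1) * κ : ℕ) : ℝ) * ρ := by
            congr 2
            omega
    have hρ2 : ρ ≤ burnσ / (2 * B * κ) :=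
      le_trans (min_le_right _ _) (min_le_left _ _)
    have hBr2 : B * ∑ s ∈ Finset.Ico q0 k, r s ≤ (M + 1 : ℝ) * burnσ / 2 := by
      have h1 : B * ∑ s ∈ Finset.Ico q0 k, r s ≤ B * ((((M + 1) * κ : ℕ) : ℝ) * ρ) :=
        mul_le_mul_of_nonneg_left hrtot hB.le
      have hcast : (((M + 1) * κ : ℕ) : ℝ) = ((M : ℝ) + 1) * (κ : ℝ) := by push_cast; ring
      have h2 : B * ((((M + 1) * κ : ℕ) : ℝ) * ρ) ≤ (M + 1 : ℝ) * burnσ / 2 := by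
        rw [hcast]
        have hρ2' : B * ((κ : ℝ) * ρ) ≤ burnσ / 2 := by
          calc B * ((κ : ℝ) * ρ) ≤ B * ((κ : ℝ) * (burnσ / (2 * B * κ))) := by
                apply mul_le_mul_of_nonneg_left _ hB.le
                exact mul_le_mul_of_nonneg_left hρ2 hκR.le
            _ = burnσ / 2 := by field_simp
        have hM1n : (0:ℝ) ≤ (M : ℝ) + 1 := by positivity
        calc B * (((M : ℝ) + 1) * (κ : ℝ) * ρ) = ((M : ℝ) + 1) * (B * ((κ : ℝ) * ρ)) := by ring
          _ ≤ ((M : ℝ) + 1) * (burnσ / 2) := mul_le_mul_of_nonneg_left hρ2' hM1n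
          _ = (M + 1 : ℝ) * burnσ / 2 := by ring
      linarith
    have hVk2 : 0 ≤ V q0 k := hV0 q0 k
    have hVq0 : V q0 q0 ≤ Vbar := hVbd q0 q0
    -- 0 ≤ Vbar + (M+1)burnσ/2 - (M+1)burnσ, i.e. (M+1)burnσ ≤ 2 Vbar, contradiction with hMge
    have hfin : ((M : ℝ) + 1) * burnσ ≤ 2 * Vbar := by
      have hcast2 : ((M + 1 : ℕ) : ℝ) = (M : ℝ) + 1 := by exact_mod_cast rfl
      rw [hcast2] at hcumM
      linarith
    have hdiv : (2 * Vbar / burnσ) * burnσ = 2 * Vbar := div_mul_cancel₀ _ (ne_of_gt hburnσpos)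
    have h9 : 2 * Vbar ≤ ((M : ℝ) - 2) * burnσ := by
      have h := mul_le_mul_of_nonneg_right hMge hburnσpos.le
      rwa [hdiv] at h
    linarith [hfin, h9, hburnσpos]


set_option maxHeartbeats 2000000 in
/-- Almost sure consensus, Theorem 1: in the distributed
subgradient-free stochastic optimization setup with two-sided randomized differences,
for every agent `i`, `‖ξ^i_k − ξ̄_k‖ → 0` as `k → ∞` with probability one. -/
theorem distributed_subgradient_free_as_consensus
    {Ω : Type*} [inst : MeasurableSpace Ω] (μ : MeasureTheory.Measure Ω)
    [IsProbabilityMeasure μ]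
    (m n : ℕ) (hn : 0 < n)
    (f : Fin n → EuclideanSpace ℝ (Fin m) → ℝ)
    (X : Fin n → Set (EuclideanSpace ℝ (Fin m)))
    (L a b e η : ℝ) (κ : ℕ)
    (W : ℕ → Fin n → Fin n → ℝ)
    (ι c : ℕ → ℝ)
    (ξ : ℕ → Fin n → Ω → EuclideanSpace ℝ (Fin m))
    (Δ : ℕ → Fin n → Ω → EuclideanSpace ℝ (Fin m))
    (ε : ℕ → Fin n → Ω → ℝ)
    (P : Fin n → EuclideanSpace ℝ (Fin m) → EuclideanSpace ℝ (Fin m))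
    (F : ℕ → MeasurableSpace Ω)
    -- local objective functions: convex, with all subgradients bounded by L, hence L-Lipschitz
    (hL : 0 < L)
    (hconv : ∀ i, ConvexOn ℝ Set.univ (f i))
    (hsubgrad : ∀ i x, ∃ g : EuclideanSpace ℝ (Fin m),
      ‖g‖ ≤ L ∧ ∀ y, f i x + ⟪g, y - x⟫ ≤ f i y)
    (hsubbound : ∀ i x (g : EuclideanSpace ℝ (Fin m)),
      (∀ y, f i x + ⟪g, y - x⟫ ≤ f i y) → ‖g‖ ≤ L)
    (hlip : ∀ i (x y : EuclideanSpace ℝ (Fin m)), |f i x - f i y| ≤ L * ‖x - y‖)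
    -- local constraint sets: nonempty bounded closed convex, with nonempty intersection
    (hXne : ∀ i, (X i).Nonempty) (hXcl : ∀ i, IsClosed (X i))
    (hXcv : ∀ i, Convex ℝ (X i)) (hXbd : ∀ i, Bornology.IsBounded (X i))
    (hXcapne : (⋂ i, X i).Nonempty)
    -- Euclidean projections onto the constraint sets
    (hP : ∀ i z, P i z ∈ X i ∧ ∀ w ∈ X i, ‖z - P i z‖ ≤ ‖z - w‖)
    -- network: doubly stochastic weights, uniformly positive entries, joint connectivity
    (hη0 : 0 < η) (hη1 : η < 1)
    (hWnonneg : ∀ k i j, 0 ≤ W k i j)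
    (hWrow : ∀ k i, ∑ j, W k i j = 1)
    (hWcol : ∀ k j, ∑ i, W k i j = 1)
    (hWdiag : ∀ k i, η ≤ W k i i)
    (hWpos : ∀ k i j, 0 < W k i j → η ≤ W k i j)
    (hκ : 1 ≤ κ)
    (hconn : ∀ k (i j : Fin n), ∃ t, k ≤ t ∧ t < k + κ ∧ η ≤ W t i j)
    -- the algorithm: x^i_k = ∑_j w^{ij}_k ξ^j_k, ξ^i_{k+1} = P_{X_i}(x^i_k − ι_k d^i_k)
    (hinit : ∀ i ω, ξ 0 i ω ∈ X i)
    (hupdate : ∀ k i ω,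
      ξ (k + 1) i ω = P i ((∑ j, W k i j • ξ k j ω) -
        ι k • twoSidedDiff (f i) (c k) (∑ j, W k i j • ξ k j ω) (Δ k i ω) (ε k i ω)))
    -- stochastic assumptions on dithers and noises
    (ha : 0 < a) (hb : 0 < b) (he : 0 < e)
    (hΔmeas : ∀ k i, Measurable (Δ k i))
    (hεmeas : ∀ k i, Measurable (ε k i))
    (hξ0meas : ∀ i, Measurable (ξ 0 i))
    (hΔne : ∀ k i, ∀ᵐ ω ∂μ, ∀ p, Δ k i ω p ≠ 0)
    (hΔbound : ∀ k i, ∀ᵐ ω ∂μ, ∀ p, |Δ k i ω p| < a ∧ |(Δ k i ω p)⁻¹| < b)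
    (hΔmean : ∀ k i p, ∫ ω, (Δ k i ω p)⁻¹ ∂μ = 0)
    (hΔindep : iIndepFun (β := fun _ : ℕ × Fin n × Fin m => ℝ)
      (fun t ω => Δ t.1 t.2.1 ω t.2.2) μ)
    (hΔident : ∀ k k' i p,
      IdentDistrib (fun ω => Δ k i ω p) (fun ω => Δ k' i ω p) μ μ)
    (hΔεindep : Indep (⨆ k, ⨆ i, MeasurableSpace.comap (Δ k i) inferInstance)
      (⨆ k, ⨆ i, MeasurableSpace.comap (ε k i) inferInstance) μ)
    -- filtration and conditional properties of the noise
    (hFle : ∀ k, F k ≤ inst)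
    (hFmono : Monotone F)
    (hFξ : ∀ k s i, s ≤ k → Measurable[F k] (ξ s i))
    (hFΔ : ∀ k s i, s < k → Measurable[F k] (Δ s i))
    (hFε : ∀ k s i, s < k → Measurable[F k] (ε s i))
    (hεcond : ∀ k i, μ[ε (k + 1) i | F k] =ᵐ[μ] 0)
    (hεmem : ∀ k i, MemLp (ε k i) 2 μ)
    (hε2 : ∀ k i, ∫ ω, (ε k i ω) ^ 2 ∂μ ≤ e ^ 2)
    -- step sizes
    (hιpos : ∀ k, 0 < ι k) (hιsum : Summable ι)
    (hcpos : ∀ k, 0 < c k) (hc0 : Tendsto c atTop (𝓝 0))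
    (hratio : ¬ Summable (fun k => ι k / c k))
    (hratio2 : Summable (fun k => (ι k / c k) ^ 2))
    (hιc : Summable (fun k => ι k * c k)) :
    ∀ i, ∀ᵐ ω ∂μ,
      Tendsto (fun k => ‖ξ k i ω - (n : ℝ)⁻¹ • ∑ j, ξ k j ω‖) atTop (𝓝 0) := by
  -- Step sizes tend to zero
  have hι0 : Tendsto ι atTop (𝓝 0) := hιsum.tendsto_atTop_zero
  -- a.s. dither bounds
  have hΔae : ∀ᵐ ω ∂μ, ∀ (k : ℕ) (j : Fin n) (p : Fin m),
      |Δ k j ω p| ≤ a ∧ |(Δ k j ω p)⁻¹| ≤ b := by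
    rw [MeasureTheory.ae_all_iff]
    intro k
    rw [MeasureTheory.ae_all_iff]
    intro j
    filter_upwards [hΔbound k j] with ω h
    exact fun p => ⟨(h p).1.le, (h p).2.le⟩
  -- a.s. vanishing of the weighted noise
  have hεae : ∀ᵐ ω ∂μ, ∀ j : Fin n,
      Tendsto (fun k => (ι k / c k) * ε k j ω) atTop (𝓝 0) := by
    rw [MeasureTheory.ae_all_iff]
    intro j
    exact noise_sq_summable_tendsto_zero μ ι c (fun k => ε k j) e
      (fun k => hεmeas k j) (fun k => hε2 k j) (fun k => hεmem k j) hratio2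
  have main : ∀ᵐ ω ∂μ, ∀ i : Fin n,
      Tendsto (fun k => ‖ξ k i ω - (n : ℝ)⁻¹ • ∑ j, ξ k j ω‖) atTop (𝓝 0) := by
    filter_upwards [hΔae, hεae] with ω hΔb hεt
    -- ===================== deterministic part =====================
    classical
    have hnne : Nonempty (Fin n) := ⟨⟨0, hn⟩⟩
    have huniv : (Finset.univ : Finset (Fin n)).Nonempty := Finset.univ_nonempty
    set i0 : Fin n := ⟨0, hn⟩ with hi0
    set sm : ℝ := Real.sqrt m with hsmdef
    have hsm0 : 0 ≤ sm := Real.sqrt_nonneg _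
    -- uniform bound on the constraint sets
    have hbnd : ∀ j : Fin n, ∃ Rj : ℝ, 0 ≤ Rj ∧ X j ⊆ Metric.closedBall 0 Rj := by
      intro j
      obtain ⟨Rj, hRj⟩ := (hXbd j).subset_closedBall 0
      exact ⟨max Rj 0, le_max_right _ _,
        hRj.trans (Metric.closedBall_subset_closedBall (le_max_left _ _))⟩
    choose Rf hRf0 hRfsub using hbnd
    set R : ℝ := Finset.univ.sup' huniv Rf with hRdef
    have hRmem : ∀ (j : Fin n) (x : EuclideanSpace ℝ (Fin m)), x ∈ X j → ‖x‖ ≤ R := by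
      intro j x hx
      have h1 := hRfsub j hx
      rw [Metric.mem_closedBall, dist_zero_right] at h1
      exact h1.trans (Finset.le_sup' Rf (Finset.mem_univ j))
    have hR0 : 0 ≤ R := (hRf0 i0).trans (Finset.le_sup' Rf (Finset.mem_univ i0))
    -- state membership and bounds
    have hmemX : ∀ (k : ℕ) (j : Fin n), ξ k j ω ∈ X j := by
      intro k
      induction k with
      | zero => exact fun j => hinit j ω
      | succ k _ => intro j; rw [hupdate k j ω]; exact (hP j _).1
    have hnormξ : ∀ k j, ‖ξ k j ω‖ ≤ R := fun k j => hRmem j _ (hmemX k j)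
    -- mixed states and perturbations
    set xm : ℕ → Fin n → EuclideanSpace ℝ (Fin m) :=
      fun k i' => ∑ j, W k i' j • ξ k j ω with hxm
    set wp : ℕ → Fin n → EuclideanSpace ℝ (Fin m) :=
      fun k i' => ι k • twoSidedDiff (f i') (c k) (xm k i') (Δ k i' ω) (ε k i' ω) with hwp
    have hup : ∀ k i', ξ (k+1) i' ω = P i' (xm k i' - wp k i') := by
      intro k i'
      simp only [hwp, hxm]
      exact hupdate k i' ω
    have hxnorm : ∀ k i', ‖xm k i'‖ ≤ R := by
      intro k i'
      simp only [hxm]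
      calc ‖∑ j, W k i' j • ξ k j ω‖ ≤ ∑ j, ‖W k i' j • ξ k j ω‖ := norm_sum_le _ _
        _ ≤ ∑ j, W k i' j * R := by
            apply Finset.sum_le_sum
            intro j _
            rw [norm_smul, Real.norm_eq_abs, abs_of_nonneg (hWnonneg k i' j)]
            exact mul_le_mul_of_nonneg_left (hnormξ k j) (hWnonneg k i' j)
        _ = R := by rw [← Finset.sum_mul, hWrow k i', one_mul]
    -- perturbation size
    set rp : ℕ → ℝ := fun k => ι k * (L * a * b * sm ^ 2)
      + (b * sm / 2) * (∑ j, |(ι k / c k) * ε k j ω|) with hrp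
    have hrp0 : ∀ k, 0 ≤ rp k := by
      intro k
      simp only [hrp]
      have h1 : 0 ≤ ι k := (hιpos k).le
      have h2 : (0:ℝ) ≤ L * a * b * sm ^ 2 := by positivity
      have h3 : (0:ℝ) ≤ ∑ j, |(ι k / c k) * ε k j ω| :=
        Finset.sum_nonneg fun j _ => abs_nonneg _
      have h4 : (0:ℝ) ≤ b * sm / 2 := by positivity
      nlinarith
    have hwle : ∀ k i', ‖wp k i'‖ ≤ rp k := by
      intro k i'
      have hc := hcpos k
      have hι := hιpos k
      have hΔn : ‖Δ k i' ω‖ ≤ sm * a := by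
        rw [hsmdef]
        exact euclid_norm_le _ a ha.le (fun p => (hΔb k i' p).1)
      have hΔi : ‖(WithLp.toLp 2 (fun p => (Δ k i' ω p)⁻¹) : EuclideanSpace ℝ (Fin m))‖ ≤ sm * b := by
        rw [hsmdef]
        exact euclid_norm_le (WithLp.toLp 2 (fun p => (Δ k i' ω p)⁻¹) : EuclideanSpace ℝ (Fin m))
          b hb.le (fun p => (hΔb k i' p).2)
      have hfd : |f i' (xm k i' + c k • Δ k i' ω) - f i' (xm k i' - c k • Δ k i' ω)|
          ≤ L * (2 * c k * (sm * a)) := by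
        have h1 := hlip i' (xm k i' + c k • Δ k i' ω) (xm k i' - c k • Δ k i' ω)
        have h2 : (xm k i' + c k • Δ k i' ω) - (xm k i' - c k • Δ k i' ω)
            = (2 * c k) • Δ k i' ω := by
          rw [two_mul, add_smul]
          abel
        rw [h2, norm_smul, Real.norm_eq_abs,
          abs_of_pos (by positivity : (0:ℝ) < 2 * c k)] at h1
        calc |f i' (xm k i' + c k • Δ k i' ω) - f i' (xm k i' - c k • Δ k i' ω)|
            ≤ L * (2 * c k * ‖Δ k i' ω‖) := h1
          _ ≤ L * (2 * c k * (sm * a)) := by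
              apply mul_le_mul_of_nonneg_left _ hL.le
              apply mul_le_mul_of_nonneg_left hΔn (by positivity)
      have hnum : |f i' (xm k i' + c k • Δ k i' ω) - f i' (xm k i' - c k • Δ k i' ω)
          + ε k i' ω| ≤ L * (2 * c k * (sm * a)) + |ε k i' ω| := by
        have habs := abs_add_le (f i' (xm k i' + c k • Δ k i' ω)
          - f i' (xm k i' - c k • Δ k i' ω)) (ε k i' ω)
        linarith
      have hwnorm : ‖wp k i'‖ = ι k
          * (|f i' (xm k i' + c k • Δ k i' ω) - f i' (xm k i' - c k • Δ k i' ω)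
              + ε k i' ω| / (2 * c k)
            * ‖(WithLp.toLp 2 (fun p => (Δ k i' ω p)⁻¹) : EuclideanSpace ℝ (Fin m))‖) := by
        simp only [hwp, twoSidedDiff]
        rw [norm_smul, norm_smul, Real.norm_eq_abs, Real.norm_eq_abs,
          abs_of_pos hι, abs_div, abs_of_pos (by positivity : (0:ℝ) < 2 * c k)]
      have hstep : ‖wp k i'‖ ≤ ι k * ((L * (2 * c k * (sm * a)) + |ε k i' ω|)
          / (2 * c k) * (sm * b)) := by
        rw [hwnorm]
        apply mul_le_mul_of_nonneg_left _ hι.le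
        apply mul_le_mul _ hΔi (norm_nonneg _) (by positivity)
        have h2c : (0:ℝ) < 2 * c k := by positivity
        exact div_le_div_of_nonneg_right hnum h2c.le
      have key : ι k * ((L * (2 * c k * (sm * a)) + |ε k i' ω|) / (2 * c k) * (sm * b))
          = ι k * (L * a * b * sm ^ 2) + (b * sm / 2) * ((ι k / c k) * |ε k i' ω|) := by
        field_simp
      have habs2 : (ι k / c k) * |ε k i' ω| = |(ι k / c k) * ε k i' ω| := by
        rw [abs_mul, abs_of_nonneg (div_nonneg hι.le hc.le)]
      have hsingle : |(ι k / c k) * ε k i' ω| ≤ ∑ j, |(ι k / c k) * ε k j ω| :=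
        Finset.single_le_sum (f := fun j => |(ι k / c k) * ε k j ω|)
          (fun j _ => abs_nonneg _) (Finset.mem_univ i')
      have hfinal : ι k * (L * a * b * sm ^ 2) + (b * sm / 2) * ((ι k / c k) * |ε k i' ω|)
          ≤ rp k := by
        simp only [hrp]
        rw [habs2]
        exact add_le_add le_rfl (mul_le_mul_of_nonneg_left hsingle (by positivity))
      calc ‖wp k i'‖ ≤ ι k * ((L * (2 * c k * (sm * a)) + |ε k i' ω|) / (2 * c k) * (sm * b)) :=
            hstep
        _ = ι k * (L * a * b * sm ^ 2) + (b * sm / 2) * ((ι k / c k) * |ε k i' ω|) := key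
        _ ≤ rp k := hfinal
    -- total perturbation including quadratic term
    set rr : ℕ → ℝ := fun k => rp k + rp k ^ 2 with hrr
    have hrr0 : ∀ k, 0 ≤ rr k := by
      intro k
      simp only [hrr]
      nlinarith [hrp0 k, sq_nonneg (rp k)]
    have hrpt : Tendsto rp atTop (𝓝 0) := by
      have h1 : Tendsto (fun k => ι k * (L * a * b * sm ^ 2)) atTop (𝓝 0) := by
        simpa using hι0.mul_const (L * a * b * sm ^ 2)
      have h2 : Tendsto (fun k => (b * sm / 2) * (∑ j, |(ι k / c k) * ε k j ω|))
          atTop (𝓝 0) := by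
        have h3 : Tendsto (fun k => ∑ j, |(ι k / c k) * ε k j ω|) atTop (𝓝 0) := by
          have h4 := tendsto_finset_sum (Finset.univ : Finset (Fin n))
            (fun j _ => (hεt j).abs)
          simpa using h4
        simpa using h3.const_mul (b * sm / 2)
      simpa [hrp] using h1.add h2
    have hrrt : Tendsto rr atTop (𝓝 0) := by
      have h2 : Tendsto (fun k => rp k ^ 2) atTop (𝓝 0) := by
        have := hrpt.mul hrpt
        simpa [sq] using this
      simpa [hrr] using hrpt.add h2
    -- Lyapunov pieces
    set G : ℕ → ℝ := fun k => ∑ i', ∑ j, W k i' j * ‖ξ k j ω - xm k i'‖ ^ 2 with hG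
    set Ψ : ℕ → ℝ := fun k => ∑ i', ‖ξ (k+1) i' ω - (xm k i' - wp k i')‖ ^ 2 with hΨ
    set Φ : ℕ → ℝ := fun k => G k + Ψ k with hΦdef
    set SS : ℕ → ℝ := fun k => ∑ i', ∑ j, ‖ξ k i' ω - ξ k j ω‖ with hSS
    have hG0 : ∀ k, 0 ≤ G k := by
      intro k
      apply Finset.sum_nonneg
      intro i' _
      apply Finset.sum_nonneg
      intro j _
      exact mul_nonneg (hWnonneg k i' j) (by positivity)
    have hΨ0 : ∀ k, 0 ≤ Ψ k := fun k => Finset.sum_nonneg fun i' _ => by positivity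
    have hΦ0 : ∀ k, 0 ≤ Φ k := fun k => add_nonneg (hG0 k) (hΨ0 k)
    have hSS0 : ∀ k, 0 ≤ SS k := fun k =>
      Finset.sum_nonneg fun i' _ => Finset.sum_nonneg fun j _ => norm_nonneg _
    -- nearest points of the intersection
    have hcapcl : IsClosed (⋂ i', X i') := isClosed_iInter (fun i' => hXcl i')
    have hcapbd : Bornology.IsBounded (⋂ i', X i') :=
      Bornology.IsBounded.subset (hXbd i0) (Set.iInter_subset X i0)
    have hcapC : IsCompact (⋂ i', X i') :=
      Metric.isCompact_of_isClosed_isBounded hcapcl hcapbd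
    have hzex : ∀ q : ℕ, ∃ z ∈ ⋂ i', X i',
        Metric.infDist (ξ q i0 ω) (⋂ i', X i') = dist (ξ q i0 ω) z :=
      fun q => hcapC.exists_infDist_eq_dist hXcapne _
    choose zs hzmem hzdist using hzex
    have hzX : ∀ q (j : Fin n), zs q ∈ X j := fun q j => Set.mem_iInter.mp (hzmem q) j
    have hznorm : ∀ q, ‖zs q‖ ≤ R := fun q => hRmem i0 _ (hzX q i0)
    set Vq : ℕ → ℕ → ℝ := fun q k => ∑ j, ‖ξ k j ω - zs q‖ ^ 2 with hVqdef
    have hdistb : ∀ (k : ℕ) (j : Fin n) (q : ℕ), ‖ξ k j ω - zs q‖ ≤ 2 * R := by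
      intro k j q
      calc ‖ξ k j ω - zs q‖ ≤ ‖ξ k j ω‖ + ‖zs q‖ := norm_sub_le _ _
        _ ≤ 2 * R := by linarith [hnormξ k j, hznorm q]
    have hV0 : ∀ q k, 0 ≤ Vq q k := fun q k => Finset.sum_nonneg fun j _ => by positivity
    have hVbd : ∀ q k, Vq q k ≤ (n : ℝ) * (2 * R) ^ 2 := by
      intro q k
      calc Vq q k ≤ ∑ _j : Fin n, (2 * R) ^ 2 := by
            apply Finset.sum_le_sum
            intro j _
            have h1 := hdistb k j q
            nlinarith [norm_nonneg (ξ k j ω - zs q)]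
        _ = (n : ℝ) * (2 * R) ^ 2 := by
            rw [Finset.sum_const, Finset.card_univ, Fintype.card_fin, nsmul_eq_mul]
    -- mixing identity
    have hxmz : ∀ k i' (z : EuclideanSpace ℝ (Fin m)),
        xm k i' - z = ∑ j, W k i' j • (ξ k j ω - z) := by
      intro k i' z
      simp only [hxm, smul_sub]
      rw [Finset.sum_sub_distrib, ← Finset.sum_smul, hWrow k i', one_smul]
    have hmixid : ∀ k (z : EuclideanSpace ℝ (Fin m)),
        ∑ i', ‖xm k i' - z‖ ^ 2
          = (∑ j, ‖ξ k j ω - z‖ ^ 2) - ∑ i', ∑ j, W k i' j * ‖ξ k j ω - xm k i'‖ ^ 2 := by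
      intro k z
      have hper : ∀ i', ∑ j, W k i' j * ‖ξ k j ω - xm k i'‖ ^ 2
          = (∑ j, W k i' j * ‖ξ k j ω - z‖ ^ 2) - ‖xm k i' - z‖ ^ 2 := by
        intro i'
        have hv : xm k i' - z = ∑ j, W k i' j • (ξ k j ω - z) := hxmz k i' z
        have hterm : ∀ j : Fin n, ‖ξ k j ω - xm k i'‖ ^ 2
            = ‖ξ k j ω - z‖ ^ 2 - 2 * ⟪ξ k j ω - z, xm k i' - z⟫ + ‖xm k i' - z‖ ^ 2 := by
          intro j
          have hd : ξ k j ω - xm k i' = (ξ k j ω - z) - (xm k i' - z) := by abel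
          rw [hd, norm_sub_sq_real]
        have hip : ∑ j, W k i' j * ⟪ξ k j ω - z, xm k i' - z⟫ = ‖xm k i' - z‖ ^ 2 := by
          have h5 : ∑ j, W k i' j * ⟪ξ k j ω - z, xm k i' - z⟫
              = ⟪∑ j, W k i' j • (ξ k j ω - z), xm k i' - z⟫ := by
            rw [sum_inner]
            exact Finset.sum_congr rfl fun j _ => (real_inner_smul_left _ _ _).symm
          rw [h5, ← hv, real_inner_self_eq_norm_sq]
        calc ∑ j, W k i' j * ‖ξ k j ω - xm k i'‖ ^ 2
            = ∑ j, (W k i' j * ‖ξ k j ω - z‖ ^ 2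
                - 2 * (W k i' j * ⟪ξ k j ω - z, xm k i' - z⟫)
                + W k i' j * ‖xm k i' - z‖ ^ 2) := by
              refine Finset.sum_congr rfl fun j _ => ?_
              rw [hterm j]
              ring
          _ = (∑ j, W k i' j * ‖ξ k j ω - z‖ ^ 2)
              - 2 * (∑ j, W k i' j * ⟪ξ k j ω - z, xm k i' - z⟫)
              + (∑ j, W k i' j) * ‖xm k i' - z‖ ^ 2 := by
              rw [Finset.sum_add_distrib, Finset.sum_sub_distrib, ← Finset.mul_sum,
                ← Finset.sum_mul]
          _ = (∑ j, W k i' j * ‖ξ k j ω - z‖ ^ 2) - ‖xm k i' - z‖ ^ 2 := by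
              rw [hip, hWrow k i', one_mul]
              ring
      calc ∑ i', ‖xm k i' - z‖ ^ 2
          = ∑ i', ((∑ j, W k i' j * ‖ξ k j ω - z‖ ^ 2)
              - ∑ j, W k i' j * ‖ξ k j ω - xm k i'‖ ^ 2) := by
            refine Finset.sum_congr rfl fun i' _ => ?_
            have h6 := hper i'
            linarith
        _ = (∑ i', ∑ j, W k i' j * ‖ξ k j ω - z‖ ^ 2)
            - ∑ i', ∑ j, W k i' j * ‖ξ k j ω - xm k i'‖ ^ 2 := Finset.sum_sub_distrib _ _
        _ = (∑ j, ‖ξ k j ω - z‖ ^ 2)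
            - ∑ i', ∑ j, W k i' j * ‖ξ k j ω - xm k i'‖ ^ 2 := by
            congr 1
            rw [Finset.sum_comm]
            refine Finset.sum_congr rfl fun j _ => ?_
            rw [← Finset.sum_mul, hWcol k j, one_mul]
    -- per-step Lyapunov inequality
    set B : ℝ := (n : ℝ) * (4 * R + 1) with hBdef
    have hBpos : 0 < B := by
      have : (0:ℝ) < n := by exact_mod_cast hn
      simp only [hBdef]
      nlinarith
    have hVstep : ∀ q k, Vq q (k+1) + Φ k ≤ Vq q k + B * rr k := by
      intro q k
      have hper2 : ∀ i' : Fin n,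
          ‖ξ (k+1) i' ω - zs q‖ ^ 2 + ‖ξ (k+1) i' ω - (xm k i' - wp k i')‖ ^ 2
          ≤ ‖xm k i' - zs q‖ ^ 2 + (4 * R + 1) * rr k := by
        intro i'
        have hproj := proj_sq_ineq (X i') (hXcv i') (P i' (xm k i' - wp k i'))
          (xm k i' - wp k i') (zs q) (hP i' _).1 (hzX q i')
          (fun w hw => (hP i' _).2 w hw)
        rw [← hup k i'] at hproj
        have hrev : ‖(xm k i' - wp k i') - ξ (k+1) i' ω‖
            = ‖ξ (k+1) i' ω - (xm k i' - wp k i')‖ := norm_sub_rev _ _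
        rw [hrev] at hproj
        have hyz : ‖(xm k i' - wp k i') - zs q‖ ^ 2
            ≤ ‖xm k i' - zs q‖ ^ 2 + (4 * R + 1) * rr k := by
          have h1 : ‖(xm k i' - wp k i') - zs q‖ ≤ ‖xm k i' - zs q‖ + rp k := by
            have hd2 : (xm k i' - wp k i') - zs q = (xm k i' - zs q) - wp k i' := by abel
            rw [hd2]
            calc ‖(xm k i' - zs q) - wp k i'‖ ≤ ‖xm k i' - zs q‖ + ‖wp k i'‖ :=
                  norm_sub_le _ _
              _ ≤ ‖xm k i' - zs q‖ + rp k := by linarith [hwle k i']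
          have h2 : ‖xm k i' - zs q‖ ≤ 2 * R := by
            calc ‖xm k i' - zs q‖ ≤ ‖xm k i'‖ + ‖zs q‖ := norm_sub_le _ _
              _ ≤ 2 * R := by linarith [hxnorm k i', hznorm q]
          have h3 : 0 ≤ ‖xm k i' - zs q‖ := norm_nonneg _
          have h4 : 0 ≤ rp k := hrp0 k
          have h5 : 0 ≤ ‖(xm k i' - wp k i') - zs q‖ := norm_nonneg _
          have h6 : rr k = rp k + rp k ^ 2 := by simp only [hrr]
          nlinarith [h1, h2, h3, h4, h5]
        linarith
      have hsum := Finset.sum_le_sum (fun i' (_ : i' ∈ Finset.univ) => hper2 i')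
      rw [Finset.sum_add_distrib, Finset.sum_add_distrib] at hsum
      have hconst : ∑ _i' : Fin n, (4 * R + 1) * rr k = (n:ℝ) * ((4 * R + 1) * rr k) := by
        rw [Finset.sum_const, Finset.card_univ, Fintype.card_fin, nsmul_eq_mul]
      rw [hconst] at hsum
      have hmix := hmixid k (zs q)
      have hGeq : ∑ i', ∑ j, W k i' j * ‖ξ k j ω - xm k i'‖ ^ 2 = G k := by
        simp only [hG]
      rw [hGeq] at hmix
      have hVq1 : ∑ i', ‖ξ (k+1) i' ω - zs q‖ ^ 2 = Vq q (k+1) := by simp only [hVqdef]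
      have hVq2 : ∑ j, ‖ξ k j ω - zs q‖ ^ 2 = Vq q k := by simp only [hVqdef]
      have hΨeq : ∑ i', ‖ξ (k+1) i' ω - (xm k i' - wp k i')‖ ^ 2 = Ψ k := by
        simp only [hΨ]
      rw [hVq1, hΨeq] at hsum
      rw [hVq2] at hmix
      have hBrr : (n:ℝ) * ((4 * R + 1) * rr k) = B * rr k := by
        simp only [hBdef]
        ring
      rw [hBrr] at hsum
      have hΦeq : Φ k = G k + Ψ k := by simp only [hΦdef]
      linarith [hsum, hmix]
    -- movement and pair estimates
    have hsqη : 0 < Real.sqrt η := Real.sqrt_pos.mpr hη0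
    set cη : ℝ := 1 + (Real.sqrt η)⁻¹ with hcηdef
    have hcη1 : 1 ≤ cη := by
      simp only [hcηdef]
      linarith [inv_nonneg.mpr hsqη.le]
    have hGsingle : ∀ (k : ℕ) (i' j : Fin n),
        W k i' j * ‖ξ k j ω - xm k i'‖ ^ 2 ≤ G k := by
      intro k i' j
      have h1 : W k i' j * ‖ξ k j ω - xm k i'‖ ^ 2
          ≤ ∑ j', W k i' j' * ‖ξ k j' ω - xm k i'‖ ^ 2 :=
        Finset.single_le_sum (f := fun j' => W k i' j' * ‖ξ k j' ω - xm k i'‖ ^ 2)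
          (fun j' _ => mul_nonneg (hWnonneg k i' j') (by positivity)) (Finset.mem_univ j)
      have h2 : ∑ j', W k i' j' * ‖ξ k j' ω - xm k i'‖ ^ 2 ≤ G k := by
        simp only [hG]
        exact Finset.single_le_sum
          (f := fun i'' => ∑ j', W k i'' j' * ‖ξ k j' ω - xm k i''‖ ^ 2)
          (fun i'' _ => Finset.sum_nonneg fun j' _ =>
            mul_nonneg (hWnonneg k i'' j') (by positivity)) (Finset.mem_univ i')
      linarith
    have hdistG : ∀ (k : ℕ) (i' j : Fin n), η ≤ W k i' j →
        ‖ξ k j ω - xm k i'‖ ≤ Real.sqrt (Φ k) * (Real.sqrt η)⁻¹ := by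
      intro k i' j hW
      have h1 : η * ‖ξ k j ω - xm k i'‖ ^ 2 ≤ Φ k := by
        have h2 : η * ‖ξ k j ω - xm k i'‖ ^ 2 ≤ W k i' j * ‖ξ k j ω - xm k i'‖ ^ 2 :=
          mul_le_mul_of_nonneg_right hW (by positivity)
        have h3 := hGsingle k i' j
        have h4 : G k ≤ Φ k := by
          simp only [hΦdef]
          linarith [hΨ0 k]
        linarith
      have h5 : ‖ξ k j ω - xm k i'‖ ^ 2 ≤ Φ k / η := by
        rw [le_div_iff₀ hη0]
        linarith
      calc ‖ξ k j ω - xm k i'‖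
          = Real.sqrt (‖ξ k j ω - xm k i'‖ ^ 2) := (Real.sqrt_sq (norm_nonneg _)).symm
        _ ≤ Real.sqrt (Φ k / η) := Real.sqrt_le_sqrt h5
        _ = Real.sqrt (Φ k) * (Real.sqrt η)⁻¹ := by
            rw [Real.sqrt_div (hΦ0 k), div_eq_mul_inv]
    have hmove : ∀ (k : ℕ) (j : Fin n),
        ‖ξ (k+1) j ω - ξ k j ω‖ ≤ cη * Real.sqrt (Φ k) + rr k := by
      intro k j
      have h1 : ‖ξ (k+1) j ω - (xm k j - wp k j)‖ ≤ Real.sqrt (Φ k) := by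
        have h2 : ‖ξ (k+1) j ω - (xm k j - wp k j)‖ ^ 2 ≤ Φ k := by
          have h3 : ‖ξ (k+1) j ω - (xm k j - wp k j)‖ ^ 2 ≤ Ψ k := by
            simp only [hΨ]
            exact Finset.single_le_sum
              (f := fun i' => ‖ξ (k+1) i' ω - (xm k i' - wp k i')‖ ^ 2)
              (fun i' _ => by positivity) (Finset.mem_univ j)
          have h4 : Ψ k ≤ Φ k := by
            simp only [hΦdef]
            linarith [hG0 k]
          linarith
        calc ‖ξ (k+1) j ω - (xm k j - wp k j)‖
            = Real.sqrt (‖ξ (k+1) j ω - (xm k j - wp k j)‖ ^ 2) :=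
              (Real.sqrt_sq (norm_nonneg _)).symm
          _ ≤ Real.sqrt (Φ k) := Real.sqrt_le_sqrt h2
      have h5 : ‖ξ k j ω - xm k j‖ ≤ Real.sqrt (Φ k) * (Real.sqrt η)⁻¹ :=
        hdistG k j j (hWdiag k j)
      have h6 : ‖wp k j‖ ≤ rr k := by
        have := hwle k j
        have h7 : rp k ≤ rr k := by
          simp only [hrr]
          nlinarith [sq_nonneg (rp k)]
        linarith
      have hdec : ξ (k+1) j ω - ξ k j ω
          = (ξ (k+1) j ω - (xm k j - wp k j)) + (xm k j - ξ k j ω) + (-(wp k j)) := by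
        abel
      calc ‖ξ (k+1) j ω - ξ k j ω‖
          = ‖(ξ (k+1) j ω - (xm k j - wp k j)) + (xm k j - ξ k j ω) + (-(wp k j))‖ := by
            rw [← hdec]
        _ ≤ ‖ξ (k+1) j ω - (xm k j - wp k j)‖ + ‖xm k j - ξ k j ω‖ + ‖-(wp k j)‖ :=
            norm_add₃_le
        _ ≤ Real.sqrt (Φ k) + Real.sqrt (Φ k) * (Real.sqrt η)⁻¹ + rr k := by
            have h8 : ‖xm k j - ξ k j ω‖ ≤ Real.sqrt (Φ k) * (Real.sqrt η)⁻¹ := by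
              rw [norm_sub_rev]
              exact h5
            have h9 : ‖-(wp k j)‖ ≤ rr k := by
              rw [norm_neg]
              exact h6
            exact add_le_add (add_le_add h1 h8) h9
        _ = cη * Real.sqrt (Φ k) + rr k := by
            simp only [hcηdef]
            ring
    set c2 : ℝ := 2 * (cη + 1) + 2 * (Real.sqrt η)⁻¹ with hc2def
    have hc2pos : 0 < c2 := by
      simp only [hc2def]
      positivity
    have hpair : ∀ (k : ℕ) (i' j : Fin n), ‖ξ k i' ω - ξ k j ω‖
        ≤ c2 * ∑ s ∈ Finset.Ico k (k + κ), (Real.sqrt (Φ s) + rr s) := by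
      intro k i' j
      obtain ⟨t, htk, htk2, htW⟩ := hconn k i' j
      set Sw : ℝ := ∑ s ∈ Finset.Ico k (k + κ), (Real.sqrt (Φ s) + rr s) with hSwdef
      have hSwterm : ∀ s, s ∈ Finset.Ico k (k + κ) → Real.sqrt (Φ s) + rr s ≤ Sw :=
        fun s hs => Finset.single_le_sum
          (f := fun s' => Real.sqrt (Φ s') + rr s')
          (fun s' _ => add_nonneg (Real.sqrt_nonneg _) (hrr0 s')) hs
      have hSw0 : 0 ≤ Sw :=
        Finset.sum_nonneg fun s _ => add_nonneg (Real.sqrt_nonneg _) (hrr0 s)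
      have hA : ‖ξ t i' ω - ξ t j ω‖ ≤ 2 * (Real.sqrt η)⁻¹ * Sw := by
        have h1 : ‖ξ t i' ω - xm t i'‖ ≤ Real.sqrt (Φ t) * (Real.sqrt η)⁻¹ :=
          hdistG t i' i' (hWdiag t i')
        have h2 : ‖ξ t j ω - xm t i'‖ ≤ Real.sqrt (Φ t) * (Real.sqrt η)⁻¹ :=
          hdistG t i' j htW
        have h3 : ‖ξ t i' ω - ξ t j ω‖ ≤ ‖ξ t i' ω - xm t i'‖ + ‖ξ t j ω - xm t i'‖ := by
          have hd : ξ t i' ω - ξ t j ω = (ξ t i' ω - xm t i') - (ξ t j ω - xm t i') := by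
            abel
          rw [hd]
          exact norm_sub_le _ _
        have h4 : Real.sqrt (Φ t) ≤ Sw := by
          have h5 := hSwterm t (Finset.mem_Ico.mpr ⟨htk, htk2⟩)
          linarith [hrr0 t]
        have h6 : (0:ℝ) ≤ (Real.sqrt η)⁻¹ := by positivity
        nlinarith [Real.sqrt_nonneg (Φ t)]
      have hpath : ∀ i'' : Fin n, ‖ξ k i'' ω - ξ t i'' ω‖ ≤ (cη + 1) * Sw := by
        intro i''
        calc ‖ξ k i'' ω - ξ t i'' ω‖
            ≤ ∑ s ∈ Finset.Ico k t, ‖ξ (s+1) i'' ω - ξ s i'' ω‖ :=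
              norm_sub_le_path (fun s => ξ s i'' ω) k t htk
          _ ≤ ∑ s ∈ Finset.Ico k t, (cη * Real.sqrt (Φ s) + rr s) :=
              Finset.sum_le_sum fun s _ => hmove s i''
          _ ≤ ∑ s ∈ Finset.Ico k (k + κ), (cη * Real.sqrt (Φ s) + rr s) := by
              apply Finset.sum_le_sum_of_subset_of_nonneg
              · exact Finset.Ico_subset_Ico le_rfl htk2.le
              · intro s _ _
                have := Real.sqrt_nonneg (Φ s)
                nlinarith [hrr0 s, hcη1]
          _ ≤ ∑ s ∈ Finset.Ico k (k + κ), ((cη + 1) * (Real.sqrt (Φ s) + rr s)) := by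
              apply Finset.sum_le_sum
              intro s _
              have := Real.sqrt_nonneg (Φ s)
              nlinarith [hrr0 s, hcη1]
          _ = (cη + 1) * Sw := by rw [hSwdef, Finset.mul_sum]
      calc ‖ξ k i' ω - ξ k j ω‖
          ≤ ‖ξ k i' ω - ξ t i' ω‖ + ‖ξ t i' ω - ξ t j ω‖ + ‖ξ t j ω - ξ k j ω‖ := by
            have hd : ξ k i' ω - ξ k j ω = (ξ k i' ω - ξ t i' ω) + (ξ t i' ω - ξ t j ω)
                + (ξ t j ω - ξ k j ω) := by abel
            rw [hd]
            exact norm_add₃_le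
        _ ≤ (cη + 1) * Sw + 2 * (Real.sqrt η)⁻¹ * Sw + (cη + 1) * Sw := by
            have h7 := hpath i'
            have h9 : ‖ξ t j ω - ξ k j ω‖ ≤ (cη + 1) * Sw := by
              rw [norm_sub_rev]
              exact hpath j
            exact add_le_add (add_le_add h7 hA) h9
        _ = c2 * Sw := by
            simp only [hc2def]
            ring
    -- window inequality for the total disagreement
    set CC : ℝ := (n : ℝ) ^ 2 * c2 with hCCdef
    have hn' : (0:ℝ) < n := by exact_mod_cast hn
    have hCCpos : 0 < CC := by
      simp only [hCCdef]
      positivity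
    have hSw : ∀ k, SS k ≤ CC * ∑ s ∈ Finset.Ico k (k + κ), (Real.sqrt (Φ s) + rr s) := by
      intro k
      calc SS k = ∑ i', ∑ j, ‖ξ k i' ω - ξ k j ω‖ := by simp only [hSS]
        _ ≤ ∑ _i' : Fin n, ∑ _j : Fin n,
            c2 * ∑ s ∈ Finset.Ico k (k + κ), (Real.sqrt (Φ s) + rr s) :=
            Finset.sum_le_sum fun i' _ => Finset.sum_le_sum fun j _ => hpair k i' j
        _ = CC * ∑ s ∈ Finset.Ico k (k + κ), (Real.sqrt (Φ s) + rr s) := by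
            rw [Finset.sum_const, Finset.sum_const, Finset.card_univ, Fintype.card_fin,
              nsmul_eq_mul, nsmul_eq_mul, hCCdef]
            ring
    -- anchor property
    have hanchor : ∀ ε' > 0, ∃ σ > 0, ∀ q, SS q ≤ σ → Vq q q ≤ ε' := by
      intro ε' hε'
      set εh : ℝ := Real.sqrt (ε' / (4 * n)) with hεhdef
      have hεhpos : 0 < εh := Real.sqrt_pos.mpr (by positivity)
      obtain ⟨σ', hσ'pos, hσ'⟩ := modulus_lemma X hXcl hXne hXcapne
        (Metric.closedBall 0 R) (isCompact_closedBall _ _) εh hεhpos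
      refine ⟨min σ' εh, lt_min hσ'pos hεhpos, fun q hq => ?_⟩
      have hpK : ξ q i0 ω ∈ Metric.closedBall (0 : EuclideanSpace ℝ (Fin m)) R := by
        rw [Metric.mem_closedBall, dist_zero_right]
        exact hnormξ q i0
      have hpair0 : ∀ j : Fin n, ‖ξ q i0 ω - ξ q j ω‖ ≤ SS q := by
        intro j
        calc ‖ξ q i0 ω - ξ q j ω‖ ≤ ∑ j', ‖ξ q i0 ω - ξ q j' ω‖ :=
              Finset.single_le_sum (f := fun j' => ‖ξ q i0 ω - ξ q j' ω‖)
                (fun j' _ => norm_nonneg _) (Finset.mem_univ j)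
          _ ≤ SS q := by
              simp only [hSS]
              exact Finset.single_le_sum (f := fun i' => ∑ j', ‖ξ q i' ω - ξ q j' ω‖)
                (fun i' _ => Finset.sum_nonneg fun j' _ => norm_nonneg _)
                (Finset.mem_univ i0)
      have hinf : ∀ j : Fin n, Metric.infDist (ξ q i0 ω) (X j) ≤ σ' := by
        intro j
        calc Metric.infDist (ξ q i0 ω) (X j) ≤ dist (ξ q i0 ω) (ξ q j ω) :=
              Metric.infDist_le_dist_of_mem (hmemX q j)
          _ = ‖ξ q i0 ω - ξ q j ω‖ := by rw [dist_eq_norm]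
          _ ≤ SS q := hpair0 j
          _ ≤ σ' := hq.trans (min_le_left _ _)
      have hcap : Metric.infDist (ξ q i0 ω) (⋂ i', X i') ≤ εh :=
        hσ' _ hpK hinf
      have hzq : dist (ξ q i0 ω) (zs q) ≤ εh := by
        rw [← hzdist q]
        exact hcap
      have hjb : ∀ j : Fin n, ‖ξ q j ω - zs q‖ ≤ 2 * εh := by
        intro j
        have h1 : ‖ξ q j ω - zs q‖ ≤ ‖ξ q j ω - ξ q i0 ω‖ + ‖ξ q i0 ω - zs q‖ := by
          have hd : ξ q j ω - zs q = (ξ q j ω - ξ q i0 ω) + (ξ q i0 ω - zs q) := by abel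
          rw [hd]
          exact norm_add_le _ _
        have h2 : ‖ξ q j ω - ξ q i0 ω‖ ≤ εh := by
          rw [norm_sub_rev]
          exact (hpair0 j).trans (hq.trans (min_le_right _ _))
        have h3 : ‖ξ q i0 ω - zs q‖ ≤ εh := by
          rw [← dist_eq_norm]
          exact hzq
        linarith
      have hsq : εh ^ 2 = ε' / (4 * n) := Real.sq_sqrt (by positivity)
      calc Vq q q = ∑ j, ‖ξ q j ω - zs q‖ ^ 2 := by simp only [hVqdef]
        _ ≤ ∑ _j : Fin n, (2 * εh) ^ 2 := by
            apply Finset.sum_le_sum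
            intro j _
            have := hjb j
            nlinarith [norm_nonneg (ξ q j ω - zs q)]
        _ = (n : ℝ) * (4 * εh ^ 2) := by
            rw [Finset.sum_const, Finset.card_univ, Fintype.card_fin, nsmul_eq_mul]
            ring
        _ = ε' := by
            rw [hsq]
            field_simp
    -- apply the abstract lemma
    have hSStend : Tendsto SS atTop (𝓝 0) :=
      scalar_consensus κ hκ B CC ((n : ℝ) * (2 * R) ^ 2) hBpos hCCpos (by positivity)
        Vq Φ rr SS hΦ0 hrr0 hSS0 hV0 hVbd hVstep hSw hanchor hrrt
    -- conclusion for each agent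
    intro i
    have hnne0 : (n:ℝ) ≠ 0 := ne_of_gt hn'
    have hid : ∀ k, ξ k i ω - (n:ℝ)⁻¹ • ∑ j, ξ k j ω
        = (n:ℝ)⁻¹ • ∑ j, (ξ k i ω - ξ k j ω) := by
      intro k
      rw [Finset.sum_sub_distrib, smul_sub, Finset.sum_const, Finset.card_univ,
        Fintype.card_fin, ← Nat.cast_smul_eq_nsmul ℝ, smul_smul,
        inv_mul_cancel₀ hnne0, one_smul]
    have hbound : ∀ k, ‖ξ k i ω - (n:ℝ)⁻¹ • ∑ j, ξ k j ω‖ ≤ (n:ℝ)⁻¹ * SS k := by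
      intro k
      rw [hid k, norm_smul, Real.norm_eq_abs, abs_of_nonneg (by positivity : (0:ℝ) ≤ (n:ℝ)⁻¹)]
      apply mul_le_mul_of_nonneg_left _ (by positivity)
      calc ‖∑ j, (ξ k i ω - ξ k j ω)‖ ≤ ∑ j, ‖ξ k i ω - ξ k j ω‖ := norm_sum_le _ _
        _ ≤ SS k := by
            simp only [hSS]
            exact Finset.single_le_sum (f := fun i' => ∑ j, ‖ξ k i' ω - ξ k j ω‖)
              (fun i' _ => Finset.sum_nonneg fun j _ => norm_nonneg _) (Finset.mem_univ i)
    have hlim : Tendsto (fun k => (n:ℝ)⁻¹ * SS k) atTop (𝓝 0) := by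
      simpa using hSStend.const_mul ((n:ℝ)⁻¹)
    exact squeeze_zero (fun k => norm_nonneg _) hbound hlim
  intro i
  filter_upwards [main] with ω h using h i
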